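/- Case k > n, final inequality: Let k > n ≥ 2 and ℓ ≥ 1 be integers with ℓ < n, let γ > log_k(n − ℓ + 1) and δ > log_k( k^γ(n−ℓ) / (k^γ − (n−ℓ) − 1) ) (assuming the argument of the logarithm is positive). Then (n−ℓ)(1 + 1/k^δ) < (k−ℓ)(1 − 1/k^γ). -/
import Mathlib


/-- Case `k > n`: a high estimate forces the accumulated potential below the
acceptance threshold. -/
theorem stmt18 (k n ℓ : ℕ) (hn : 2 ≤ n) (hnk : n < k) (hℓ : 1 ≤ ℓ) (hℓn : ℓ < n)
    (γ δ : ℝ) (hγ : Real.logb k ((n : ℝ) - ℓ + 1) < γ)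
    (hpos : 0 < (k : ℝ) ^ γ - ((n : ℝ) - ℓ) - 1)
    (hδ : Real.logb k ((k : ℝ) ^ γ * ((n : ℝ) - ℓ) /
            ((k : ℝ) ^ γ - ((n : ℝ) - ℓ) - 1)) < δ) :
    ((n : ℝ) - ℓ) * (1 + 1 / (k : ℝ) ^ δ)
      < ((k : ℝ) - ℓ) * (1 - 1 / (k : ℝ) ^ γ) := by
  have hk1 : (1:ℝ) < k := by
    have : 1 < k := by omega
    exact_mod_cast this
  set m : ℝ := (n : ℝ) - ℓ with hm
  have hm1 : 1 ≤ m := by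
    have : (ℓ : ℝ) + 1 ≤ n := by exact_mod_cast hℓn
    simp [hm]; linarith
  have hkl : m + 1 ≤ (k : ℝ) - ℓ := by
    have : (n : ℝ) + 1 ≤ k := by exact_mod_cast hnk
    simp [hm]; linarith
  have hA : m + 1 < (k : ℝ) ^ γ :=
    (Real.logb_lt_iff_lt_rpow hk1 (by linarith)).mp hγ
  have hApos : (0:ℝ) < (k : ℝ) ^ γ := Real.rpow_pos_of_pos (by linarith) _
  have hBpos : (0:ℝ) < (k : ℝ) ^ δ := Real.rpow_pos_of_pos (by linarith) _
  have hargpos : 0 < (k : ℝ) ^ γ * m / ((k : ℝ) ^ γ - m - 1) :=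
    div_pos (mul_pos hApos (by linarith)) hpos
  have hB : (k : ℝ) ^ γ * m / ((k : ℝ) ^ γ - m - 1) < (k : ℝ) ^ δ :=
    (Real.logb_lt_iff_lt_rpow hk1 hargpos).mp hδ
  have hBmul : (k : ℝ) ^ γ * m < (k : ℝ) ^ δ * ((k : ℝ) ^ γ - m - 1) := by
    rw [div_lt_iff₀ hpos] at hB; linarith
  have h1A : 0 < 1 - 1 / (k : ℝ) ^ γ := by
    rw [sub_pos, div_lt_one hApos]; linarith
  have key : m * (1 + 1 / (k : ℝ) ^ δ) < (m + 1) * (1 - 1 / (k : ℝ) ^ γ) := by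
    have h2 : m * (1 / (k : ℝ) ^ δ) < ((k : ℝ) ^ γ - m - 1) * (1 / (k : ℝ) ^ γ) := by
      rw [mul_one_div, mul_one_div, div_lt_div_iff₀ hBpos hApos]
      nlinarith [hBmul]
    have hAA : (k : ℝ) ^ γ * (1 / (k : ℝ) ^ γ) = 1 := by
      field_simp
    nlinarith [h2, hAA]
  have : (m + 1) * (1 - 1 / (k : ℝ) ^ γ) ≤ ((k : ℝ) - ℓ) * (1 - 1 / (k : ℝ) ^ γ) :=
    mul_le_mul_of_nonneg_right hkl (le_of_lt h1A)
  linarith
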